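/- Let χ be a real primitive Dirichlet character of conductor D ≥ 3. Then |L(1,χ)| ≪ log D, i.e. there is an absolute constant C such that |∑_{n=1}^∞ χ(n)/n| ≤ C·log D. -/

import Mathlib

open DirichletCharacter Real Filter Topology

set_option maxHeartbeats 1000000 in

lemma key_bound {D : ℕ} [NeZero D] (hD : 3 ≤ D) (χ : DirichletCharacter ℂ D) (hχ : χ ≠ 1)
    {σ : ℝ} (hσ : 1 < σ) :
    ‖LSeries (fun n => χ n) (σ : ℂ)‖ ≤ 2 + Real.log D := by
  have hDpos : 0 < D := by omega
  set f : ℕ → ℂ := LSeries.term (fun n => χ n) (σ : ℂ) with hf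
  have hσ' : 1 < ((σ : ℂ)).re := by simpa using hσ
  have hsum : Summable f := LSeriesSummable_of_one_lt_re χ hσ'
  -- the real tail weights
  set u : ZMod D → ℕ → ℝ := fun j m => ((j.val + D * (m + 1) : ℕ) : ℝ) ^ (-σ) with hu
  have hnpos : ∀ (j : ZMod D) (m : ℕ), 0 < ((j.val + D * (m + 1) : ℕ) : ℝ) := by
    intro j m
    have : 0 < j.val + D * (m + 1) := by positivity
    exact_mod_cast this
  have hupos : ∀ j m, 0 < u j m := fun j m => Real.rpow_pos_of_pos (hnpos j m) _
  have husum : ∀ j, Summable (u j) := by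
    intro j
    have h1 : Summable (fun n : ℕ => (n : ℝ) ^ (-σ)) :=
      Real.summable_nat_rpow.mpr (by linarith)
    have h2 : Summable (fun m : ℕ => ((m + 1 : ℕ) : ℝ) ^ (-σ)) := by
      have := (summable_nat_add_iff 1).mpr h1
      simpa using this
    refine Summable.of_nonneg_of_le (fun m => (hupos j m).le) (fun m => ?_) h2
    apply Real.rpow_le_rpow_of_nonpos (by positivity)
    · exact_mod_cast Nat.le_add_left _ _ |>.trans
        (by nlinarith [j.val.zero_le, Nat.one_le_iff_ne_zero.mpr (NeZero.ne D)])
    · linarith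
  set U : ZMod D → ℝ := fun j => ∑' m, u j m with hU
  -- term formula on the tail
  have hterm : ∀ (j : ZMod D) (m : ℕ), f (j.val + D * (m + 1)) = χ j * ((u j m : ℝ) : ℂ) := by
    intro j m
    have hne : (j.val + D * (m + 1)) ≠ 0 := by positivity
    rw [hf, LSeries.term_of_ne_zero hne]
    have h1 : ((j.val + D * (m + 1) : ℕ) : ZMod D) = j := by
      push_cast
      simp [ZMod.natCast_self, ZMod.natCast_val, ZMod.cast_id]
    have h2 : ((j.val + D * (m + 1) : ℕ) : ℂ) ^ (σ : ℂ) =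
        ((((j.val + D * (m + 1) : ℕ) : ℝ) ^ σ : ℝ) : ℂ) := by
      rw [Complex.ofReal_cpow (by positivity) σ]
      push_cast
      ring_nf
    rw [h1, h2, hu]
    simp only
    rw [Real.rpow_neg (by positivity), Complex.ofReal_inv, div_eq_mul_inv]
  -- decomposition of the L-series
  have hdecomp : LSeries (fun n => χ n) (σ : ℂ) =
      (∑ j : ZMod D, f j.val) + ∑ j : ZMod D, χ j * ((U j : ℝ) : ℂ) := by
    rw [LSeries, Nat.sumByResidueClasses hsum D, ← Finset.sum_add_distrib]
    refine Finset.sum_congr rfl fun j _ => ?_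
    have hinj : Function.Injective (fun m : ℕ => j.val + D * m) := by
      intro a b h
      simp only at h
      exact Nat.eq_of_mul_eq_mul_left hDpos (Nat.add_left_cancel h)
    have h1 : Summable (fun m => f (j.val + D * m)) := hsum.comp_injective hinj
    rw [Summable.tsum_eq_zero_add h1, Nat.mul_zero, Nat.add_zero]
    congr 1
    calc ∑' m, f (j.val + D * (m + 1)) = ∑' m, χ j * ((u j m : ℝ) : ℂ) :=
          tsum_congr fun m => hterm j m
      _ = χ j * ∑' m, ((u j m : ℝ) : ℂ) := tsum_mul_left
      _ = χ j * ((U j : ℝ) : ℂ) := by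
          rw [hU]
          congr 1
          exact (Complex.ofRealCLM.map_tsum (husum j)).symm
  -- bound on the head
  have hhead : ‖∑ j : ZMod D, f j.val‖ ≤ 1 + Real.log D := by
    refine (norm_sum_le _ _).trans ?_
    have hswap : ∑ j : ZMod D, ‖f j.val‖ = ∑ n ∈ Finset.range D, ‖f n‖ := by
      apply Finset.sum_nbij' (i := fun (j : ZMod D) => j.val) (j := fun n => (n : ZMod D))
      · intro a _; exact Finset.mem_range.mpr (ZMod.val_lt a)
      · intro a _; exact Finset.mem_univ _
      · intro a _; exact ZMod.natCast_rightInverse a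
      · intro a ha; exact ZMod.val_cast_of_lt (Finset.mem_range.mp ha)
      · intro a _; rfl
    rw [hswap]
    obtain ⟨E, rfl⟩ : ∃ E, D = E + 1 := ⟨D - 1, by omega⟩
    rw [Finset.sum_range_succ']
    have h1 : ∑ i ∈ Finset.range E, ‖f (i + 1)‖ ≤ (harmonic E : ℝ) := by
      rw [harmonic]
      push_cast
      apply Finset.sum_le_sum
      intro i _
      have hne : (i + 1 : ℕ) ≠ 0 := Nat.succ_ne_zero i
      rw [hf, LSeries.norm_term_eq, if_neg hne]
      simp only [Complex.ofReal_re]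
      have hb : (1 : ℝ) ≤ ((i + 1 : ℕ) : ℝ) := by exact_mod_cast Nat.one_le_iff_ne_zero.mpr hne
      have h2 : ((i + 1 : ℕ) : ℝ) ≤ ((i + 1 : ℕ) : ℝ) ^ σ := by
        calc ((i + 1 : ℕ) : ℝ) = ((i + 1 : ℕ) : ℝ) ^ (1 : ℝ) := (Real.rpow_one _).symm
          _ ≤ _ := Real.rpow_le_rpow_of_exponent_le hb hσ.le
      have h3 : ‖χ ((i + 1 : ℕ) : ZMod (E + 1))‖ ≤ 1 := χ.norm_le_one _
      calc ‖χ ((i + 1 : ℕ) : ZMod (E + 1))‖ / ((i + 1 : ℕ) : ℝ) ^ σ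
            ≤ 1 / ((i + 1 : ℕ) : ℝ) := div_le_div₀ zero_le_one h3 (by positivity) h2
        _ = (((i : ℝ) + 1))⁻¹ := by push_cast; rw [one_div]
    have h2 := harmonic_le_one_add_log E
    have hE2 : 2 ≤ E := by omega
    have h3 : Real.log E ≤ Real.log (E + 1) := by
      apply Real.log_le_log (by positivity)
      linarith
    have h0 : ‖f 0‖ = 0 := by rw [hf, LSeries.term_zero, norm_zero]
    have hcast : ((E : ℝ) + 1) = (((E + 1 : ℕ) : ℝ)) := by push_cast; ring
    rw [h0, add_zero]
    calc ∑ i ∈ Finset.range E, ‖f (i + 1)‖ ≤ (harmonic E : ℝ) := h1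
      _ ≤ 1 + Real.log E := h2
      _ ≤ 1 + Real.log ((E + 1 : ℕ) : ℝ) := by rw [← hcast]; linarith
  -- bound on the tail
  have htail : ‖∑ j : ZMod D, χ j * ((U j : ℝ) : ℂ)‖ ≤ 1 := by
    have hsum0 : ∑ j : ZMod D, χ j = 0 := MulChar.sum_eq_zero_of_ne_one hχ
    -- replace U j by U j - U 0
    have hrw : ∑ j : ZMod D, χ j * ((U j : ℝ) : ℂ) =
        ∑ j : ZMod D, χ j * (((U j - U 0 : ℝ)) : ℂ) := by
      have : ∑ j : ZMod D, χ j * ((U j : ℝ) : ℂ) =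
          ∑ j : ZMod D, (χ j * (((U j - U 0 : ℝ)) : ℂ) + χ j * ((U 0 : ℝ) : ℂ)) := by
        refine Finset.sum_congr rfl fun j _ => ?_
        push_cast
        ring
      rw [this, Finset.sum_add_distrib, ← Finset.sum_mul, hsum0, zero_mul, add_zero]
    rw [hrw]
    -- telescoping bound for each j
    set b : ℕ → ℝ := fun m => u 0 m with hb
    have hval0 : (0 : ZMod D).val = 0 := ZMod.val_zero
    have hble : ∀ (j : ZMod D) m, b (m + 1) ≤ u j m ∧ u j m ≤ b m := by
      intro j m
      constructor
      · rw [hb, hu]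
        simp only [hval0]
        apply Real.rpow_le_rpow_of_nonpos (hnpos j m) _ (by linarith)
        have : j.val + D * (m + 1) ≤ 0 + D * (m + 1 + 1) := by
          have := (ZMod.val_lt j)
          nlinarith
        exact_mod_cast this
      · rw [hb, hu]
        simp only [hval0]
        apply Real.rpow_le_rpow_of_nonpos _ _ (by linarith)
        · have : 0 < 0 + D * (m + 1) := by positivity
          exact_mod_cast this
        · have : 0 + D * (m + 1) ≤ j.val + D * (m + 1) := by omega
          exact_mod_cast this
    have hwsum : HasSum (fun m : ℕ => b m - b (m + 1)) (b 0) := by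
      have hanti : ∀ m, b (m + 1) ≤ b m := fun m => ((hble 0 m).1).trans (hble 0 m).2 |>.trans_eq rfl
      have hbz : Tendsto b atTop (nhds 0) := by
        have h1 : Tendsto (fun m : ℕ => (((0 : ZMod D).val + D * (m + 1) : ℕ) : ℝ)) atTop atTop := by
          apply tendsto_natCast_atTop_atTop.comp
          apply tendsto_atTop_mono (fun n => ?_) tendsto_id
          · show id n ≤ (0 : ZMod D).val + D * (n + 1); simp only [id]; nlinarith
        exact (tendsto_rpow_neg_atTop (by linarith : (0:ℝ) < σ)).comp h1
      rw [hasSum_iff_tendsto_nat_of_nonneg (fun m => sub_nonneg.mpr (hanti m))]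
      have hps : ∀ n : ℕ, ∑ i ∈ Finset.range n, (b i - b (i + 1)) = b 0 - b n :=
        fun n => Finset.sum_range_sub' b n
      simp only [hps]
      simpa using tendsto_const_nhds.sub hbz
    have hjb : ∀ j : ZMod D, |U j - U 0| ≤ (D : ℝ)⁻¹ := by
      intro j
      have hdiff : U j - U 0 = ∑' m, (u j m - b m) := (Summable.tsum_sub (husum j) (husum 0)).symm
      have habs : ∀ m, |u j m - b m| ≤ b m - b (m + 1) := by
        intro m
        rw [abs_of_nonpos (sub_nonpos.mpr (hble j m).2)]
        have := (hble j m).1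
        linarith
      have hsumabs : Summable (fun m => |u j m - b m|) :=
        Summable.of_nonneg_of_le (fun m => abs_nonneg _) habs hwsum.summable
      have h1 : |U j - U 0| ≤ ∑' m, |u j m - b m| := by
        rw [hdiff]
        have := norm_tsum_le_tsum_norm (f := fun m => u j m - b m)
          (by simpa [Real.norm_eq_abs] using hsumabs)
        simpa [Real.norm_eq_abs] using this
      have h2 : ∑' m, |u j m - b m| ≤ b 0 := by
        rw [← hwsum.tsum_eq]
        exact Summable.tsum_le_tsum habs hsumabs hwsum.summable
      have h3 : b 0 ≤ (D : ℝ)⁻¹ := by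
        have hb0 : b 0 = (D : ℝ) ^ (-σ) := by
          rw [hb, hu]; simp
        rw [hb0]
        calc (D : ℝ) ^ (-σ) ≤ (D : ℝ) ^ (-1 : ℝ) := by
              apply Real.rpow_le_rpow_of_exponent_le _ (by linarith)
              exact_mod_cast hD.trans' (by norm_num)
          _ = (D : ℝ)⁻¹ := Real.rpow_neg_one _
      linarith
    calc ‖∑ j : ZMod D, χ j * (((U j - U 0 : ℝ)) : ℂ)‖
        ≤ ∑ j : ZMod D, ‖χ j * (((U j - U 0 : ℝ)) : ℂ)‖ := norm_sum_le _ _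
      _ ≤ ∑ j : ZMod D, (D : ℝ)⁻¹ := by
          refine Finset.sum_le_sum fun j _ => ?_
          rw [norm_mul, Complex.norm_real, Real.norm_eq_abs]
          calc ‖χ j‖ * |U j - U 0| ≤ 1 * (D : ℝ)⁻¹ := by
                apply mul_le_mul (χ.norm_le_one j) (hjb j) (abs_nonneg _) zero_le_one
            _ = (D : ℝ)⁻¹ := one_mul _
      _ = 1 := by
          rw [Finset.sum_const, Finset.card_univ, ZMod.card, nsmul_eq_mul]
          exact mul_inv_cancel₀ (by exact_mod_cast hDpos.ne')
  calc ‖LSeries (fun n => χ n) (σ : ℂ)‖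
      ≤ ‖∑ j : ZMod D, f j.val‖ + ‖∑ j : ZMod D, χ j * ((U j : ℝ) : ℂ)‖ := by
        rw [hdecomp]; exact norm_add_le _ _
    _ ≤ (1 + Real.log D) + 1 := add_le_add hhead htail
    _ = 2 + Real.log D := by ring

theorem lfunction_one_le_log :
    ∃ C : ℝ, 0 < C ∧ ∀ (D : ℕ) [NeZero D], 3 ≤ D →
      ∀ χ : DirichletCharacter ℂ D, χ.IsPrimitive → (∀ n : ℕ, (χ n).im = 0) →
        ‖LFunction χ 1‖ ≤ C * Real.log D := by
  refine ⟨3, by norm_num, ?_⟩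
  intro D _ hD χ hprim _
  have h3 : (3:ℝ) ≤ (D:ℝ) := by exact_mod_cast hD
  have hD1 : (1:ℝ) ≤ Real.log D := by
    rw [Real.le_log_iff_exp_le (by linarith)]
    have := Real.exp_one_lt_d9
    linarith
  have hχ : χ ≠ 1 := by
    intro h
    have hc : conductor (1 : DirichletCharacter ℂ D) = 1 := DirichletCharacter.conductor_one
    rw [DirichletCharacter.IsPrimitive, h, hc] at hprim
    omega
  have hcont : Tendsto (fun σ : ℝ => LFunction χ (σ:ℂ)) (𝓝[>] (1:ℝ)) (𝓝 (LFunction χ 1)) := by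
    have h1 : ContinuousAt (LFunction χ) 1 :=
      (differentiableAt_LFunction χ 1 (Or.inr hχ)).continuousAt
    have h2 : Tendsto (fun σ:ℝ => (σ:ℂ)) (𝓝[>] (1:ℝ)) (𝓝 (1:ℂ)) := by
      have := (Complex.continuous_ofReal.tendsto 1).mono_left
        (nhdsWithin_le_nhds (s := Set.Ioi (1:ℝ)))
      simpa using this
    exact h1.tendsto.comp h2
  refine le_of_tendsto hcont.norm ?_
  filter_upwards [self_mem_nhdsWithin] with σ hσ
  have hσ1 : 1 < σ := hσ
  rw [LFunction_eq_LSeries χ (by simpa using hσ1)]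
  calc ‖LSeries (fun n => χ n) (σ:ℂ)‖ ≤ 2 + Real.log D := key_bound hD χ hχ hσ1
    _ ≤ 3 * Real.log D := by linarith
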